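/- arXiv:2201.10942 — 3 statements merged into one kernel-verified Lean document; each statement's English description precedes it below -/
import Mathlib

section
/- Let ℓ ⊂ ℝⁿ be a line through the origin and let Y₁^ℓ = {Λ ∈ X_n : Λ ∩ ℓ is a unimodular (covolume-1) lattice in ℓ}. Then Y₁^ℓ is the orbit of the closed subgroup G(ℓ) = {g ∈ SL_n(ℝ) : g v = v for all v ∈ ℓ}, and Y₁^ℓ is closed in X_n. -/
open Matrix

noncomputable instance stmt6.instTop (n : ℕ) :
    TopologicalSpace (SpecialLinearGroup (Fin n) ℝ) :=
  TopologicalSpace.induced (fun g => (g : Matrix (Fin n) (Fin n) ℝ)) inferInstance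

namespace Stmt6Aux

variable {n : ℕ}

/-- Cast of an integer vector to a real vector. -/
def cv (w : Fin n → ℤ) : Fin n → ℝ := fun j => (w j : ℝ)

lemma cv_inj : Function.Injective (cv (n := n)) := fun a b h =>
  funext fun j => Int.cast_injective (congrFun h j)

lemma cv_smul (d : ℤ) (u : Fin n → ℤ) : cv (d • u) = (d : ℝ) • cv u := by
  funext j; simp [cv]

lemma cv_neg (w : Fin n → ℤ) : cv (-w) = -cv w := by
  funext j; simp [cv]

lemma cv_zero : cv (0 : Fin n → ℤ) = 0 := by
  funext j; simp [cv]

lemma cv_mulVec (M : Matrix (Fin n) (Fin n) ℤ) (w : Fin n → ℤ) :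
    cv (M *ᵥ w) = (M.map (Int.cast : ℤ → ℝ)) *ᵥ cv w := by
  funext i
  simp [cv, Matrix.mulVec, dotProduct]

/-- Primitivity of an integer vector. -/
def Prim (w : Fin n → ℤ) : Prop := ∀ (d : ℤ) (u : Fin n → ℤ), w = d • u → IsUnit d

lemma Prim.neg {w : Fin n → ℤ} (h : Prim w) : Prim (-w) := by
  intro d u hdu
  exact h d (-u) (by rw [smul_neg, ← hdu, neg_neg])

lemma Prim.bezout {w : Fin n → ℤ} (hw : Prim w) : ∃ u : Fin n → ℤ, ∑ j, u j * w j = 1 := by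
  obtain ⟨d, hd⟩ := (IsPrincipalIdealRing.principal (Ideal.span (Set.range w))).principal
  rw [Ideal.submodule_span_eq] at hd
  have hdvd : ∀ i, d ∣ w i := fun i => by
    have h1 : w i ∈ Ideal.span (Set.range w) := Ideal.subset_span ⟨i, rfl⟩
    rw [hd] at h1
    exact Ideal.mem_span_singleton.mp h1
  have hwu : w = d • fun i => w i / d :=
    funext fun i => by
      simp only [Pi.smul_apply, smul_eq_mul]
      exact (Int.mul_ediv_cancel' (hdvd i)).symm
  have hu : IsUnit d := hw _ _ hwu
  have h1 : (1 : ℤ) ∈ Ideal.span (Set.range w) := by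
    rw [hd, Ideal.span_singleton_eq_top.mpr hu]
    trivial
  exact Ideal.mem_span_range_iff_exists_fun.mp h1

lemma prim_of_max {ℓ : Submodule ℝ (Fin n → ℝ)} {g : Matrix.SpecialLinearGroup (Fin n) ℝ}
    {w : Fin n → ℤ}
    (hmem : (g : Matrix (Fin n) (Fin n) ℝ) *ᵥ cv w ∈ ℓ)
    (hdot : ((g : Matrix (Fin n) (Fin n) ℝ) *ᵥ cv w) ⬝ᵥ
      ((g : Matrix (Fin n) (Fin n) ℝ) *ᵥ cv w) = 1)
    (hmax : ∀ w' : Fin n → ℤ, (g : Matrix (Fin n) (Fin n) ℝ) *ᵥ cv w' ∈ ℓ → ∃ k : ℤ, w' = k • w) :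
    Prim w := by
  have hw0 : w ≠ 0 := by
    rintro rfl
    rw [cv_zero, Matrix.mulVec_zero] at hdot
    simp at hdot
  intro d u hdu
  have hd0 : d ≠ 0 := by
    rintro rfl
    rw [zero_smul] at hdu
    exact hw0 hdu
  have humem : (g : Matrix (Fin n) (Fin n) ℝ) *ᵥ cv u ∈ ℓ := by
    have h1 : (g : Matrix (Fin n) (Fin n) ℝ) *ᵥ cv w
        = (d : ℝ) • ((g : Matrix (Fin n) (Fin n) ℝ) *ᵥ cv u) := by
      rw [hdu, cv_smul, Matrix.mulVec_smul]
    have h2 := ℓ.smul_mem ((d : ℝ))⁻¹ hmem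
    rw [h1, inv_smul_smul₀ (by exact_mod_cast hd0)] at h2
    exact h2
  obtain ⟨k, hk⟩ := hmax u humem
  have hkey : w = (d * k) • w := by rw [mul_smul, ← hk, ← hdu]
  obtain ⟨j, hj⟩ := Function.ne_iff.mp hw0
  have hj0 : w j ≠ 0 := by simpa using hj
  have hj' : w j = d * k * w j := by
    conv_lhs => rw [hkey]
    simp [Pi.smul_apply, smul_eq_mul]
  have h2 : (d * k - 1) * w j = 0 := by ring_nf; linarith [hj']
  rcases mul_eq_zero.mp h2 with h | h
  · exact IsUnit.of_mul_eq_one (a := d) k (by linarith)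
  · exact absurd h hj0

lemma coe_inv_mul (g : Matrix.SpecialLinearGroup (Fin n) ℝ) :
    ((g⁻¹ : Matrix.SpecialLinearGroup (Fin n) ℝ) : Matrix (Fin n) (Fin n) ℝ)
      * (g : Matrix (Fin n) (Fin n) ℝ) = 1 := by
  rw [← Matrix.SpecialLinearGroup.coe_mul, inv_mul_cancel, Matrix.SpecialLinearGroup.coe_one]

lemma mulVec_left_cancel {g : Matrix.SpecialLinearGroup (Fin n) ℝ} {x y : Fin n → ℝ}
    (h : (g : Matrix (Fin n) (Fin n) ℝ) *ᵥ x = (g : Matrix (Fin n) (Fin n) ℝ) *ᵥ y) : x = y := by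
  calc x = 1 *ᵥ x := (Matrix.one_mulVec x).symm
  _ = ((g⁻¹ : Matrix.SpecialLinearGroup (Fin n) ℝ) : Matrix (Fin n) (Fin n) ℝ)
        *ᵥ ((g : Matrix (Fin n) (Fin n) ℝ) *ᵥ x) := by
      rw [Matrix.mulVec_mulVec, coe_inv_mul]
  _ = ((g⁻¹ : Matrix.SpecialLinearGroup (Fin n) ℝ) : Matrix (Fin n) (Fin n) ℝ)
        *ᵥ ((g : Matrix (Fin n) (Fin n) ℝ) *ᵥ y) := by rw [h]
  _ = y := by rw [Matrix.mulVec_mulVec, coe_inv_mul, Matrix.one_mulVec]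

lemma mulVec_inv_eq {g : Matrix.SpecialLinearGroup (Fin n) ℝ} {x y : Fin n → ℝ}
    (h : (g : Matrix (Fin n) (Fin n) ℝ) *ᵥ x = y) :
    ((g⁻¹ : Matrix.SpecialLinearGroup (Fin n) ℝ) : Matrix (Fin n) (Fin n) ℝ) *ᵥ y = x := by
  rw [← h, Matrix.mulVec_mulVec, coe_inv_mul, Matrix.one_mulVec]

/-- The image of any set of integer vectors in `ℝⁿ` is closed. -/
lemma isClosed_cvImage (A : Set (Fin n → ℤ)) : IsClosed (cv '' A) := by
  refine isClosed_of_closure_subset fun x hx => ?_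
  obtain ⟨b, hbA, hb⟩ := Metric.mem_closure_iff.mp hx (1/4) (by norm_num)
  have key : ∀ b' ∈ cv '' A, dist x b' < 1/4 → b' = b := by
    rintro _ ⟨w', hw', rfl⟩ hd'
    obtain ⟨w, hwA, rfl⟩ := hbA
    have hww : w' = w := by
      funext j
      have h1 : dist (cv w' j) (cv w j) ≤ dist (cv w') (cv w) := dist_le_pi_dist _ _ j
      have h2 : dist (cv w') (cv w) < 1/2 :=
        lt_of_le_of_lt (dist_triangle_left _ _ x) (by linarith)
      have h3 : |(w' j : ℝ) - (w j : ℝ)| < 1 := by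
        have := lt_of_le_of_lt h1 h2
        rw [Real.dist_eq] at this
        calc |(w' j : ℝ) - (w j : ℝ)| < 1/2 := this
        _ < 1 := by norm_num
      have h4 : |w' j - w j| < (1 : ℤ) := by
        have : ((|w' j - w j| : ℤ) : ℝ) < 1 := by push_cast; exact h3
        exact_mod_cast this
      have h5 := abs_lt.mp h4
      omega
    rw [hww]
  have hxb : x = b := by
    by_contra hne
    obtain ⟨b', hb'A, hb'⟩ := Metric.mem_closure_iff.mp hx (min (dist x b) (1/4))
      (lt_min (dist_pos.mpr hne) (by norm_num))
    have heq := key b' hb'A (lt_of_lt_of_le hb' (min_le_right _ _))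
    rw [heq] at hb'
    exact absurd (lt_of_lt_of_le hb' (min_le_left _ _)) (lt_irrefl _)
  rw [hxb]; exact hbA

/-- A primitive vector is part of a basis of `ℤⁿ` (as the vector with index `0`). -/
lemma exists_basis (hn : 0 < n) {w : Fin n → ℤ} (hw : Prim w) :
    ∃ b : Module.Basis (Fin n) ℤ (Fin n → ℤ), b ⟨0, hn⟩ = w := by
  obtain ⟨u, hu⟩ := hw.bezout
  set f : (Fin n → ℤ) →ₗ[ℤ] ℤ := ∑ j, u j • LinearMap.proj j with hf
  have hfapp : ∀ z, f z = ∑ j, u j * z j := by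
    intro z
    simp [hf, LinearMap.sum_apply, LinearMap.smul_apply, LinearMap.proj_apply, smul_eq_mul]
  have hfw : f w = 1 := by rw [hfapp]; exact hu
  obtain ⟨m, bN⟩ := Submodule.basisOfPid (Pi.basisFun ℤ (Fin n)) (LinearMap.ker f)
  have hli : ∀ (c : ℤ), ∀ x ∈ LinearMap.ker f, c • w + x = 0 → c = 0 := by
    intro c x hx hcx
    have h1 := congrArg f hcx
    rw [f.map_add, f.map_smul, hfw, LinearMap.mem_ker.mp hx, f.map_zero] at h1
    simpa using h1
  have hsp : ∀ z, ∃ c : ℤ, z + c • w ∈ LinearMap.ker f := fun z =>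
    ⟨-f z, by rw [LinearMap.mem_ker, f.map_add, f.map_smul, hfw]; simp⟩
  set b0 := Module.Basis.mkFinCons w bN hli hsp with hb0
  have hcard : m + 1 = n := by
    have h1 := Module.finrank_eq_card_basis b0
    have h2 := Module.finrank_eq_card_basis (Pi.basisFun ℤ (Fin n))
    rw [Fintype.card_fin] at h1 h2
    omega
  refine ⟨b0.reindex (finCongr hcard), ?_⟩
  rw [Module.Basis.reindex_apply]
  have h0 : (finCongr hcard).symm ⟨0, hn⟩ = (0 : Fin (m + 1)) := by
    ext; simp
  rw [h0]
  have := congrFun (Module.Basis.coe_mkFinCons w bN hli hsp) 0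
  rw [← hb0] at this
  simpa using this

/-- Given two bases of `ℤⁿ` such that the change of basis has determinant 1,
there is an element of `SL_n(ℤ)` taking `b₁ i` to `b₂ i`. -/
lemma sl_of_bases (b₁ b₂ : Module.Basis (Fin n) ℤ (Fin n → ℤ)) (i0 : Fin n)
    (hdet : LinearMap.det ((b₁.equiv b₂ (Equiv.refl _)) : (Fin n → ℤ) →ₗ[ℤ] (Fin n → ℤ)) = 1) :
    ∃ γ : Matrix.SpecialLinearGroup (Fin n) ℤ,
      (γ : Matrix (Fin n) (Fin n) ℤ) *ᵥ (b₁ i0) = b₂ i0 := by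
  set e := b₁.equiv b₂ (Equiv.refl _) with he
  refine ⟨⟨LinearMap.toMatrix' (e : (Fin n → ℤ) →ₗ[ℤ] (Fin n → ℤ)), by
    rw [LinearMap.det_toMatrix']; exact hdet⟩, ?_⟩
  have h1 : LinearMap.toMatrix' (e : (Fin n → ℤ) →ₗ[ℤ] (Fin n → ℤ)) *ᵥ (b₁ i0)
      = (e : (Fin n → ℤ) →ₗ[ℤ] (Fin n → ℤ)) (b₁ i0) := by
    rw [← Matrix.toLin'_apply, Matrix.toLin'_toMatrix']
  rw [h1]
  simp only [LinearEquiv.coe_coe, he, Module.Basis.equiv_apply, Equiv.refl_apply]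

/-- For `n ≥ 2`, any primitive vector can be taken to any other primitive vector by `SL_n(ℤ)`. -/
lemma exists_sl (hn : 1 < n) {w₁ w₂ : Fin n → ℤ} (h₁ : Prim w₁) (h₂ : Prim w₂) :
    ∃ γ : Matrix.SpecialLinearGroup (Fin n) ℤ,
      (γ : Matrix (Fin n) (Fin n) ℤ) *ᵥ w₁ = w₂ := by
  have h0 : 0 < n := by omega
  obtain ⟨b₁, hb₁⟩ := exists_basis h0 h₁
  obtain ⟨b₂, hb₂⟩ := exists_basis h0 h₂
  set i0 : Fin n := ⟨0, h0⟩ with hi0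
  set j1 : Fin n := ⟨1, hn⟩ with hj1
  have hne : i0 ≠ j1 := by
    intro h
    have := congrArg Fin.val h
    simp [hi0, hj1] at this
  have hunit : IsUnit (LinearMap.det
      ((b₁.equiv b₂ (Equiv.refl _)) : (Fin n → ℤ) →ₗ[ℤ] (Fin n → ℤ))) :=
    LinearEquiv.isUnit_det' _
  rcases Int.isUnit_eq_one_or hunit with hd | hd
  · obtain ⟨γ, hγ⟩ := sl_of_bases b₁ b₂ i0 hd
    exact ⟨γ, by rw [← hb₁, ← hb₂]; exact hγ⟩
  · -- determinant -1 : flip a sign of the second basis at index j1 ≠ i0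
    set u : Fin n → ℤˣ := fun i => if i = j1 then -1 else 1 with hu
    set b₂' := b₂.unitsSMul u with hb₂'
    have h2' : b₂' i0 = w₂ := by
      rw [hb₂', Module.Basis.unitsSMul_apply, hu]
      simp [if_neg hne, hb₂]
    set e := b₁.equiv b₂ (Equiv.refl _) with he
    set e₂ := b₂.equiv b₂' (Equiv.refl _) with he₂
    have hcomp : ((b₁.equiv b₂' (Equiv.refl _)) : (Fin n → ℤ) →ₗ[ℤ] (Fin n → ℤ))
        = (e₂ : (Fin n → ℤ) →ₗ[ℤ] (Fin n → ℤ)).comp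
          (e : (Fin n → ℤ) →ₗ[ℤ] (Fin n → ℤ)) := by
      apply b₁.ext
      intro i
      simp [he, he₂, Module.Basis.equiv_apply]
    have hmat : LinearMap.toMatrix b₂ b₂ (e₂ : (Fin n → ℤ) →ₗ[ℤ] (Fin n → ℤ))
        = Matrix.diagonal (fun i => ((u i : ℤ))) := by
      ext i j
      rw [LinearMap.toMatrix_apply]
      have h3 : e₂ (b₂ j) = (u j : ℤ) • b₂ j := by
        rw [he₂, Module.Basis.equiv_apply, Equiv.refl_apply, hb₂', Module.Basis.unitsSMul_apply]
        rfl
      simp only [LinearEquiv.coe_coe]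
      rw [h3, LinearEquiv.map_smul, Module.Basis.repr_self, Finsupp.smul_apply, Finsupp.single_apply,
        Matrix.diagonal_apply]
      by_cases hij : i = j
      · subst hij; simp
      · simp [hij, Ne.symm hij]
    have hdet2 : LinearMap.det (e₂ : (Fin n → ℤ) →ₗ[ℤ] (Fin n → ℤ)) = -1 := by
      rw [← LinearMap.det_toMatrix b₂, hmat, Matrix.det_diagonal]
      have : ∀ i, ((u i : ℤ)) = if i = j1 then -1 else 1 := by
        intro i; rw [hu]; split <;> simp_all
      rw [Finset.prod_congr rfl (fun i _ => this i)]
      rw [Finset.prod_ite_eq' Finset.univ j1 (fun _ => (-1 : ℤ))]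
      simp
    have hdet' : LinearMap.det
        ((b₁.equiv b₂' (Equiv.refl _)) : (Fin n → ℤ) →ₗ[ℤ] (Fin n → ℤ)) = 1 := by
      rw [hcomp, LinearMap.det_comp, hdet2, hd]
      norm_num
    obtain ⟨γ, hγ⟩ := sl_of_bases b₁ b₂' i0 hdet'
    exact ⟨γ, by rw [← hb₁, ← h2']; exact hγ⟩

/-- In `SL_1`, the underlying matrix is the identity. -/
lemma sl_one_coe (hn : n = 1) (g : Matrix.SpecialLinearGroup (Fin n) ℝ) :
    (g : Matrix (Fin n) (Fin n) ℝ) = 1 := by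
  have : Subsingleton (Fin n) := by rw [hn]; infer_instance
  ext i j
  have hij : j = i := Subsingleton.elim _ _
  subst hij
  rw [Matrix.one_apply_eq]
  have hdet := g.prop
  rw [Matrix.det_eq_elem_of_subsingleton _ j] at hdet
  exact hdet

lemma coe_map (Mz : Matrix.SpecialLinearGroup (Fin n) ℤ) :
    ((Matrix.SpecialLinearGroup.map (Int.castRingHom ℝ) Mz : Matrix.SpecialLinearGroup (Fin n) ℝ)
      : Matrix (Fin n) (Fin n) ℝ)
      = (Mz : Matrix (Fin n) (Fin n) ℤ).map (Int.cast : ℤ → ℝ) := by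
  simp [Matrix.SpecialLinearGroup.map_apply_coe, RingHom.mapMatrix_apply]

end Stmt6Aux

open Stmt6Aux in
/-- In `X_n = SL_n(ℝ)/SL_n(ℤ)`, the set `Y₁^ℓ` of unimodular lattices `g·ℤⁿ` meeting
the line `ℓ = ℝ·v₀` in a unimodular (covolume-one, i.e. generated by a unit vector)
lattice of `ℓ` is: (a) closed; (b) invariant under the subgroup
`G(ℓ) = {g ∈ SL_n(ℝ) : g v = v for all v ∈ ℓ}`, which is closed; and (c) a single
orbit of `G(ℓ)`. -/
theorem stmt_6 (n : ℕ) (v₀ : Fin n → ℝ) (hv₀ : v₀ ≠ 0)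
    (ℓ : Submodule ℝ (Fin n → ℝ)) (hℓ : ℓ = Submodule.span ℝ {v₀})
    (SLZ : Subgroup (SpecialLinearGroup (Fin n) ℝ))
    (hSLZ : SLZ = (Matrix.SpecialLinearGroup.map (n := Fin n) (Int.castRingHom ℝ)).range)
    (Y₁ : Set (SpecialLinearGroup (Fin n) ℝ ⧸ SLZ))
    (hY₁ : Y₁ = {x | ∃ g : SpecialLinearGroup (Fin n) ℝ, QuotientGroup.mk g = x ∧
      ∃ w : Fin n → ℤ,
        ((g : Matrix (Fin n) (Fin n) ℝ).mulVec (fun j => (w j : ℝ))) ∈ ℓ ∧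
        ((g : Matrix (Fin n) (Fin n) ℝ).mulVec (fun j => (w j : ℝ))) ⬝ᵥ
          ((g : Matrix (Fin n) (Fin n) ℝ).mulVec (fun j => (w j : ℝ))) = 1 ∧
        ∀ w' : Fin n → ℤ,
          ((g : Matrix (Fin n) (Fin n) ℝ).mulVec (fun j => (w' j : ℝ))) ∈ ℓ →
          ∃ k : ℤ, w' = k • w}) :
    IsClosed Y₁ ∧
    IsClosed {g : SpecialLinearGroup (Fin n) ℝ |
      ∀ y ∈ ℓ, (g : Matrix (Fin n) (Fin n) ℝ).mulVec y = y} ∧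
    (∀ x ∈ Y₁, ∀ g : SpecialLinearGroup (Fin n) ℝ,
      (∀ y ∈ ℓ, (g : Matrix (Fin n) (Fin n) ℝ).mulVec y = y) → g • x ∈ Y₁) ∧
    (∀ x ∈ Y₁, ∀ y ∈ Y₁, ∃ g : SpecialLinearGroup (Fin n) ℝ,
      (∀ z ∈ ℓ, (g : Matrix (Fin n) (Fin n) ℝ).mulVec z = z) ∧ g • x = y) := by
  classical
  -- basic facts about v₀ and the unit vector v̂
  have hvv : 0 < v₀ ⬝ᵥ v₀ := by
    obtain ⟨j, hj⟩ := Function.ne_iff.mp hv₀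
    have hj0 : v₀ j ≠ 0 := by simpa using hj
    have hpos : 0 < v₀ j * v₀ j := mul_self_pos.mpr hj0
    exact Finset.sum_pos' (fun i _ => mul_self_nonneg _) ⟨j, Finset.mem_univ j, hpos⟩
  set r : ℝ := Real.sqrt (v₀ ⬝ᵥ v₀) with hrdef
  have hr : 0 < r := Real.sqrt_pos.mpr hvv
  have hr2 : r * r = v₀ ⬝ᵥ v₀ := Real.mul_self_sqrt hvv.le
  set vhat : Fin n → ℝ := r⁻¹ • v₀ with hvhat
  have hvhatmem : vhat ∈ ℓ := by
    rw [hℓ, hvhat]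
    exact Submodule.smul_mem _ _ (Submodule.mem_span_singleton_self _)
  have hvhatdot : vhat ⬝ᵥ vhat = 1 := by
    rw [hvhat, smul_dotProduct, dotProduct_smul, ← hr2]
    simp only [smul_eq_mul]
    field_simp
  -- classification of unit vectors in ℓ
  have hunitvec : ∀ x ∈ ℓ, x ⬝ᵥ x = 1 → x = vhat ∨ x = -vhat := by
    intro x hx hdot
    rw [hℓ, Submodule.mem_span_singleton] at hx
    obtain ⟨a, rfl⟩ := hx
    rw [smul_dotProduct, dotProduct_smul, smul_eq_mul, smul_eq_mul] at hdot
    have h1 : (a * r) * (a * r) = 1 := by rw [← hr2] at hdot; ring_nf; ring_nf at hdot; linarith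
    rcases mul_self_eq_one_iff.mp h1 with h | h
    · left
      have ha : a = r⁻¹ := by field_simp; linarith
      rw [hvhat, ha]
    · right
      have ha : a = -r⁻¹ := by field_simp; linarith
      rw [hvhat, ha, neg_smul]
  -- the closed set S of SL_n(ℝ)
  set S : Set (SpecialLinearGroup (Fin n) ℝ) :=
    {g | ∃ w : Fin n → ℤ, Prim w ∧ (g : Matrix (Fin n) (Fin n) ℝ) *ᵥ cv w = vhat} with hS
  -- S is the preimage of Y₁
  have claimA : (QuotientGroup.mk (s := SLZ)) ⁻¹' Y₁ = S := by
    ext g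
    constructor
    · intro hg
      rw [Set.mem_preimage, hY₁] at hg
      obtain ⟨g', hmk, w, h1, h2, h3⟩ := hg
      -- transport witness from g' to g
      have hγ : g'⁻¹ * g ∈ SLZ := QuotientGroup.eq.mp hmk
      rw [hSLZ] at hγ
      obtain ⟨Mz, hMz⟩ := hγ
      have hgg : g = g' * Matrix.SpecialLinearGroup.map (Int.castRingHom ℝ) Mz := by
        rw [hMz, mul_inv_cancel_left]
      -- basic identity : for any integer vector z, g *ᵥ cv (Mz *ᵥ z) has a nice form
      have hkey : ∀ z : Fin n → ℤ,
          (g : Matrix (Fin n) (Fin n) ℝ) *ᵥ cv z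
            = (g' : Matrix (Fin n) (Fin n) ℝ) *ᵥ cv ((Mz : Matrix (Fin n) (Fin n) ℤ) *ᵥ z) := by
        intro z
        rw [cv_mulVec, hgg, Matrix.SpecialLinearGroup.coe_mul, coe_map,
          ← Matrix.mulVec_mulVec]
      set w₀ : Fin n → ℤ := ((Mz⁻¹ : Matrix.SpecialLinearGroup (Fin n) ℤ)
        : Matrix (Fin n) (Fin n) ℤ) *ᵥ w with hw₀
      have hMzw₀ : (Mz : Matrix (Fin n) (Fin n) ℤ) *ᵥ w₀ = w := by
        rw [hw₀, Matrix.mulVec_mulVec, ← Matrix.SpecialLinearGroup.coe_mul,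
          mul_inv_cancel, Matrix.SpecialLinearGroup.coe_one, Matrix.one_mulVec]
      have hgw₀ : (g : Matrix (Fin n) (Fin n) ℝ) *ᵥ cv w₀
          = (g' : Matrix (Fin n) (Fin n) ℝ) *ᵥ cv w := by
        rw [hkey w₀, hMzw₀]
      -- witness conditions for (g, w₀)
      have h1' : (g : Matrix (Fin n) (Fin n) ℝ) *ᵥ cv w₀ ∈ ℓ := by rw [hgw₀]; exact h1
      have h2' : ((g : Matrix (Fin n) (Fin n) ℝ) *ᵥ cv w₀) ⬝ᵥ
          ((g : Matrix (Fin n) (Fin n) ℝ) *ᵥ cv w₀) = 1 := by rw [hgw₀]; exact h2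
      have h3' : ∀ w' : Fin n → ℤ,
          (g : Matrix (Fin n) (Fin n) ℝ) *ᵥ cv w' ∈ ℓ → ∃ k : ℤ, w' = k • w₀ := by
        intro w' hw'
        rw [hkey w'] at hw'
        obtain ⟨k, hk⟩ := h3 _ hw'
        refine ⟨k, ?_⟩
        have h5 := congrArg (fun z => ((Mz⁻¹ : Matrix.SpecialLinearGroup (Fin n) ℤ)
          : Matrix (Fin n) (Fin n) ℤ) *ᵥ z) hk
        rw [Matrix.mulVec_mulVec, ← Matrix.SpecialLinearGroup.coe_mul, inv_mul_cancel,
          Matrix.SpecialLinearGroup.coe_one, Matrix.one_mulVec, Matrix.mulVec_smul] at h5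
        rw [h5, hw₀]
      have hprim : Prim w₀ := prim_of_max h1' h2' h3'
      rcases hunitvec _ h1' h2' with h | h
      · exact ⟨w₀, hprim, h⟩
      · refine ⟨-w₀, hprim.neg, ?_⟩
        rw [cv_neg, Matrix.mulVec_neg, h, neg_neg]
    · rintro ⟨w, hprim, heq⟩
      rw [Set.mem_preimage, hY₁]
      refine ⟨g, rfl, w, ?_, ?_, ?_⟩
      · show (g : Matrix (Fin n) (Fin n) ℝ) *ᵥ cv w ∈ ℓ
        rw [heq]; exact hvhatmem
      · show ((g : Matrix (Fin n) (Fin n) ℝ) *ᵥ cv w) ⬝ᵥ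
            ((g : Matrix (Fin n) (Fin n) ℝ) *ᵥ cv w) = 1
        rw [heq]; exact hvhatdot
      · intro w' hw'
        have hw'mem : (g : Matrix (Fin n) (Fin n) ℝ) *ᵥ cv w' ∈ ℓ := hw'
        rw [hℓ, Submodule.mem_span_singleton] at hw'mem
        obtain ⟨a, ha⟩ := hw'mem
        -- cv w' = (a * r) • cv w
        have hcv : cv w' = (a * r) • cv w := by
          apply mulVec_left_cancel (g := g)
          rw [Matrix.mulVec_smul, heq, ← ha, hvhat]
          funext i
          simp only [Pi.smul_apply, smul_eq_mul]
          field_simp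
        obtain ⟨u, hu⟩ := hprim.bezout
        set c : ℝ := a * r with hc
        refine ⟨∑ j, u j * w' j, ?_⟩
        have hcast : ((∑ j, u j * w' j : ℤ) : ℝ) = c := by
          push_cast
          have : ∀ j, (w' j : ℝ) = c * (w j : ℝ) := fun j => by
            have := congrFun hcv j
            simpa [cv, hc] using this
          calc (∑ j, (u j : ℝ) * (w' j : ℝ)) = ∑ j, (u j : ℝ) * (c * (w j : ℝ)) := by
                refine Finset.sum_congr rfl fun j _ => by rw [this j]
          _ = c * ∑ j, (u j : ℝ) * (w j : ℝ) := by
                rw [Finset.mul_sum]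
                exact Finset.sum_congr rfl fun j _ => by ring
          _ = c * ((∑ j, u j * w j : ℤ) : ℝ) := by push_cast; ring
          _ = c := by rw [hu]; simp
        apply cv_inj
        rw [cv_smul, hcast, hcv]
  -- closedness of S
  have hSclosed : IsClosed S := by
    have hrepr : S = (fun g : SpecialLinearGroup (Fin n) ℝ =>
        ((g : Matrix (Fin n) (Fin n) ℝ)).adjugate *ᵥ vhat) ⁻¹' (cv '' {w | Prim w}) := by
      ext g
      simp only [Set.mem_preimage, Set.mem_image, Set.mem_setOf_eq, hS]
      constructor
      · rintro ⟨w, hprim, heq⟩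
        refine ⟨w, hprim, ?_⟩
        have h6 := mulVec_inv_eq heq
        rw [Matrix.SpecialLinearGroup.coe_inv] at h6
        exact h6.symm
      · rintro ⟨w, hprim, heq⟩
        refine ⟨w, hprim, ?_⟩
        have h1 : ((g⁻¹ : SpecialLinearGroup (Fin n) ℝ)
            : Matrix (Fin n) (Fin n) ℝ) *ᵥ vhat = cv w := by
          rw [Matrix.SpecialLinearGroup.coe_inv]; exact heq.symm
        have h6 := mulVec_inv_eq (g := g⁻¹) h1
        simpa using h6
    rw [hrepr]
    refine IsClosed.preimage ?_ (isClosed_cvImage _)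
    have hcont : Continuous (fun g : SpecialLinearGroup (Fin n) ℝ =>
        (g : Matrix (Fin n) (Fin n) ℝ)) := continuous_induced_dom
    exact (hcont.matrix_adjugate).matrix_mulVec continuous_const
  refine ⟨?_, ?_, ?_, ?_⟩
  -- (a) Y₁ is closed
  · have hq := isQuotientMap_quotient_mk' (s := QuotientGroup.leftRel SLZ)
    rw [← hq.isClosed_preimage]
    exact claimA ▸ hSclosed
  -- (b) G(ℓ) is closed
  · have hrw : {g : SpecialLinearGroup (Fin n) ℝ |
        ∀ y ∈ ℓ, (g : Matrix (Fin n) (Fin n) ℝ).mulVec y = y}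
        = ⋂ y ∈ (ℓ : Set (Fin n → ℝ)),
            {g : SpecialLinearGroup (Fin n) ℝ | (g : Matrix (Fin n) (Fin n) ℝ).mulVec y = y} := by
      ext g; simp
    rw [hrw]
    refine isClosed_biInter fun y hy => ?_
    exact isClosed_eq (Continuous.matrix_mulVec continuous_induced_dom continuous_const)
      continuous_const
  -- (c) invariance under G(ℓ)
  · intro x hx g hfix
    rw [hY₁] at hx ⊢
    obtain ⟨g', hmk, w, h1, h2, h3⟩ := hx
    replace h1 : (g' : Matrix (Fin n) (Fin n) ℝ) *ᵥ cv w ∈ ℓ := h1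
    replace h2 : ((g' : Matrix (Fin n) (Fin n) ℝ) *ᵥ cv w) ⬝ᵥ
        ((g' : Matrix (Fin n) (Fin n) ℝ) *ᵥ cv w) = 1 := h2
    replace h3 : ∀ w' : Fin n → ℤ,
        (g' : Matrix (Fin n) (Fin n) ℝ) *ᵥ cv w' ∈ ℓ → ∃ k : ℤ, w' = k • w := h3
    have hfixinv : ∀ t ∈ ℓ, ((g⁻¹ : SpecialLinearGroup (Fin n) ℝ)
        : Matrix (Fin n) (Fin n) ℝ) *ᵥ t = t := by
      intro t ht
      conv_lhs => rw [← hfix t ht]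
      exact mulVec_inv_eq rfl
    refine ⟨g * g', by rw [← hmk]; rfl, w, ?_, ?_, ?_⟩
    · show ((g * g' : SpecialLinearGroup (Fin n) ℝ)
        : Matrix (Fin n) (Fin n) ℝ) *ᵥ cv w ∈ ℓ
      rw [Matrix.SpecialLinearGroup.coe_mul, ← Matrix.mulVec_mulVec, hfix _ h1]
      exact h1
    · show (((g * g' : SpecialLinearGroup (Fin n) ℝ)
        : Matrix (Fin n) (Fin n) ℝ) *ᵥ cv w) ⬝ᵥ
        (((g * g' : SpecialLinearGroup (Fin n) ℝ)
        : Matrix (Fin n) (Fin n) ℝ) *ᵥ cv w) = 1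
      rw [Matrix.SpecialLinearGroup.coe_mul, ← Matrix.mulVec_mulVec, hfix _ h1]
      exact h2
    · intro w' hw'
      replace hw' : ((g * g' : SpecialLinearGroup (Fin n) ℝ)
          : Matrix (Fin n) (Fin n) ℝ) *ᵥ cv w' ∈ ℓ := hw'
      have hmem : (g : Matrix (Fin n) (Fin n) ℝ) *ᵥ
          ((g' : Matrix (Fin n) (Fin n) ℝ) *ᵥ cv w') ∈ ℓ := by
        rw [Matrix.mulVec_mulVec]
        rw [← Matrix.SpecialLinearGroup.coe_mul]
        exact hw'
      have hz : (g' : Matrix (Fin n) (Fin n) ℝ) *ᵥ cv w' ∈ ℓ := by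
        have := hfixinv _ hmem
        rw [Matrix.mulVec_mulVec, coe_inv_mul, Matrix.one_mulVec] at this
        rw [this]
        exact hmem
      exact h3 w' hz
  -- (d) single orbit
  · intro x hx y hy
    rcases Nat.eq_zero_or_pos n with hn0 | hnpos
    · exfalso
      apply hv₀
      funext j
      exact absurd j.2 (by omega)
    have hxS : ∃ g₁, QuotientGroup.mk g₁ = x ∧ g₁ ∈ S := by
      have hx' := hx
      rw [hY₁] at hx'
      obtain ⟨g₁, hmk, -⟩ := hx'
      refine ⟨g₁, hmk, ?_⟩
      rw [← claimA, Set.mem_preimage, hmk]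
      exact hx
    have hyS : ∃ g₂, QuotientGroup.mk g₂ = y ∧ g₂ ∈ S := by
      have hy' := hy
      rw [hY₁] at hy'
      obtain ⟨g₂, hmk, -⟩ := hy'
      refine ⟨g₂, hmk, ?_⟩
      rw [← claimA, Set.mem_preimage, hmk]
      exact hy
    obtain ⟨g₁, hmk₁, w₁, hp₁, he₁⟩ := hxS
    obtain ⟨g₂, hmk₂, w₂, hp₂, he₂⟩ := hyS
    -- find γ ∈ SL_n(ℤ) with γ w₁ = w₂
    have hγ : ∃ γ : Matrix.SpecialLinearGroup (Fin n) ℤ,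
        (γ : Matrix (Fin n) (Fin n) ℤ) *ᵥ w₁ = w₂ := by
      rcases Nat.lt_or_ge 1 n with hn | hn
      · exact exists_sl hn hp₁ hp₂
      · -- n = 1
        have hn1 : n = 1 := by omega
        refine ⟨1, ?_⟩
        have hw12 : w₁ = w₂ := by
          apply cv_inj
          have hc1 : cv w₁ = vhat := by
            rw [← he₁, sl_one_coe hn1 g₁, Matrix.one_mulVec]
          have hc2 : cv w₂ = vhat := by
            rw [← he₂, sl_one_coe hn1 g₂, Matrix.one_mulVec]
          rw [hc1, hc2]
        rw [Matrix.SpecialLinearGroup.coe_one, Matrix.one_mulVec, hw12]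
    obtain ⟨γ, hγw⟩ := hγ
    set γR := Matrix.SpecialLinearGroup.map (Int.castRingHom ℝ) γ with hγR
    set g : SpecialLinearGroup (Fin n) ℝ := g₂ * γR * g₁⁻¹ with hg
    have hγRmem : γR ∈ SLZ := by rw [hSLZ]; exact ⟨γ, rfl⟩
    have hfixvhat : (g : Matrix (Fin n) (Fin n) ℝ) *ᵥ vhat = vhat := by
      have s1 : ((g₁⁻¹ : SpecialLinearGroup (Fin n) ℝ)
          : Matrix (Fin n) (Fin n) ℝ) *ᵥ vhat = cv w₁ := mulVec_inv_eq he₁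
      have s2 : (γR : Matrix (Fin n) (Fin n) ℝ) *ᵥ cv w₁ = cv w₂ := by
        rw [hγR, coe_map, ← cv_mulVec, hγw]
      rw [hg, Matrix.SpecialLinearGroup.coe_mul, Matrix.SpecialLinearGroup.coe_mul,
        ← Matrix.mulVec_mulVec, ← Matrix.mulVec_mulVec, s1, s2, he₂]
    refine ⟨g, ?_, ?_⟩
    · intro z hz
      rw [hℓ, Submodule.mem_span_singleton] at hz
      obtain ⟨a, rfl⟩ := hz
      have hv : v₀ = r • vhat := by
        rw [hvhat, smul_smul]
        field_simp
        rw [one_smul]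
      rw [hv, smul_smul, Matrix.mulVec_smul, hfixvhat]
    · rw [← hmk₁, ← hmk₂]
      have : g • (QuotientGroup.mk g₁ : SpecialLinearGroup (Fin n) ℝ ⧸ SLZ)
          = QuotientGroup.mk (g * g₁) := rfl
      rw [this, hg]
      have hgg : g₂ * γR * g₁⁻¹ * g₁ = g₂ * γR := by group
      rw [hgg]
      exact QuotientGroup.mk_mul_of_mem g₂ hγRmem
end

section
/- Let X be a locally compact space with locally finite Borel measure μ, and let (μ_T)_{T>0} be a net of Borel probability measures such that μ_T(B) → μ(B) for every set B in a basis 𝒯 of open sets with μ-null boundary (closed under approximation of intersections by finite disjoint unions, and such that every bounded measure-≤ε set can be covered by basis sets of total measure ≤ 2ε). Then μ_T(W) → μ(W) for every bounded measurable W with μ(∂W) = 0. -/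
open MeasureTheory Filter

/-- If a family of probability measures `μ_T` converges to `μ` on every member of a
basis `𝒯` of open sets with `μ`-null boundary, where `𝒯` admits inner approximation
of bounded Jordan-measurable sets by finite disjoint subfamilies (a), and every
bounded set of `μ`-measure `≤ ε` can be covered by finitely many basis sets of total
measure `≤ 2ε` (b), then `μ_T(W) → μ(W)` for every bounded measurable `W` with
`μ(∂W) = 0`. -/
theorem stmt_17 {X : Type*} [TopologicalSpace X] [LocallyCompactSpace X] [T2Space X]
    [MeasurableSpace X] [BorelSpace X]
    (μ : Measure X) [IsProbabilityMeasure μ]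
    (μT : ℝ → Measure X) (hμT : ∀ T, IsProbabilityMeasure (μT T))
    (𝒯 : Set (Set X)) (hbasis : TopologicalSpace.IsTopologicalBasis 𝒯)
    (hnull : ∀ B ∈ 𝒯, μ (frontier B) = 0)
    (hconv : ∀ B ∈ 𝒯, Tendsto (fun T => μT T B) atTop (nhds (μ B)))
    (hinner : ∀ W : Set X, MeasurableSet W → (∃ K, IsCompact K ∧ W ⊆ K) →
      μ (frontier W) = 0 → ∀ ε : ENNReal, 0 < ε →
      ∃ (m : ℕ) (B : Fin m → Set X), (∀ i, B i ∈ 𝒯) ∧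
        Pairwise (Function.onFun Disjoint B) ∧ (∀ i, B i ⊆ W) ∧
        μ W ≤ ∑ i, μ (B i) + ε)
    (hcover : ∀ S : Set X, (∃ K, IsCompact K ∧ S ⊆ K) → ∀ ε : ENNReal, μ S ≤ ε →
      ∃ (m : ℕ) (B : Fin m → Set X), (∀ i, B i ∈ 𝒯) ∧
        S ⊆ (⋃ i, B i) ∧ ∑ i, μ (B i) ≤ 2 * ε) :
    ∀ W : Set X, MeasurableSet W → (∃ K, IsCompact K ∧ W ⊆ K) →
      μ (frontier W) = 0 →
      Tendsto (fun T => μT T W) atTop (nhds (μ W)) := by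

  rintro W hWmeas ⟨K, hK, hWK⟩ hWfr
  have hclW : IsCompact (closure W) :=
    hK.of_isClosed_subset isClosed_closure (closure_minimal hWK hK.isClosed)
  have hμclW : μ (closure W) = μ W := by
    refine le_antisymm ?_ (measure_mono subset_closure)
    calc μ (closure W) ≤ μ (W ∪ frontier W) := by
          apply measure_mono
          intro x hx
          by_cases h : x ∈ W
          · exact Or.inl h
          · exact Or.inr ⟨hx, fun hint => h (interior_subset hint)⟩
      _ ≤ μ W + μ (frontier W) := measure_union_le _ _
      _ = μ W := by rw [hWfr, add_zero]
  have hμWtop : μ W ≠ ⊤ := (measure_lt_top μ W).ne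
  rw [ENNReal.tendsto_nhds hμWtop]
  intro ε hε
  set δ : ENNReal := min (ε / 4) 1 with hδdef
  have hδpos : 0 < δ := lt_min (ENNReal.div_pos hε.ne' (by norm_num)) one_pos
  have hδtop : δ ≠ ⊤ := ne_top_of_le_ne_top ENNReal.one_ne_top (min_le_right _ _)
  have h4δ : 4 * δ ≤ ε := by
    calc 4 * δ ≤ 4 * (ε / 4) := by gcongr; exact min_le_left _ _
      _ = ε := ENNReal.mul_div_cancel' (by norm_num) (by norm_num)
  obtain ⟨m, B, hB𝒯, hBdisj, hBsub, hBapprox⟩ :=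
    hinner W hWmeas ⟨K, hK, hWK⟩ hWfr δ hδpos
  have hBopen : ∀ i, IsOpen (B i) := fun i => hbasis.isOpen (hB𝒯 i)
  set U : Set X := ⋃ i, B i with hUdef
  have hUmeas : MeasurableSet U :=
    MeasurableSet.iUnion fun i => (hBopen i).measurableSet
  have hμU : ∀ ν : Measure X, ν U = ∑ i, ν (B i) := fun ν => by
    rw [hUdef, measure_iUnion hBdisj fun i => (hBopen i).measurableSet,
      tsum_fintype]
  have hUW : U ⊆ W := Set.iUnion_subset hBsub
  have hsB_le : ∑ i, μ (B i) ≤ μ W := (hμU μ) ▸ measure_mono hUW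
  have hsB_top : ∑ i, μ (B i) ≠ ⊤ := ne_top_of_le_ne_top hμWtop hsB_le
  set S : Set X := closure W \ U with hSdef
  have hSμ : μ S ≤ δ := by
    have h1 : μ S = μ (closure W) - μ U :=
      measure_diff ((hUW.trans subset_closure)) hUmeas.nullMeasurableSet
        (ne_top_of_le_ne_top hμWtop ((hμU μ) ▸ hsB_le))
    rw [h1, hμclW, hμU μ]
    exact tsub_le_iff_right.mpr (by rw [add_comm]; exact hBapprox)
  obtain ⟨n, C, hC𝒯, hScov, hCsum⟩ :=
    hcover S ⟨closure W, hclW, Set.diff_subset⟩ δ hSμ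
  have hsC_top : ∑ j, μ (C j) ≠ ⊤ :=
    ne_top_of_le_ne_top (ENNReal.mul_ne_top (by norm_num) hδtop) hCsum
  have hBtend : Tendsto (fun T => ∑ i, μT T (B i)) atTop (nhds (∑ i, μ (B i))) :=
    tendsto_finset_sum _ fun i _ => hconv _ (hB𝒯 i)
  have hCtend : Tendsto (fun T => ∑ j, μT T (C j)) atTop (nhds (∑ j, μ (C j))) :=
    tendsto_finset_sum _ fun j _ => hconv _ (hC𝒯 j)
  have hevB := (ENNReal.tendsto_nhds hsB_top).mp hBtend δ hδpos
  have hevC := (ENNReal.tendsto_nhds hsC_top).mp hCtend δ hδpos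
  filter_upwards [hevB, hevC] with T hTB hTC
  have hWcov : W ⊆ U ∪ ⋃ j, C j := by
    intro x hx
    by_cases h : x ∈ U
    · exact Or.inl h
    · exact Or.inr (hScov ⟨subset_closure hx, h⟩)
  constructor
  · calc μ W - ε ≤ μ W - (δ + δ) := by
          apply tsub_le_tsub_left
          calc δ + δ ≤ 4 * δ := by
                rw [show (4:ENNReal) * δ = δ + δ + δ + δ by ring]
                exact le_add_of_nonneg_right (by positivity) |>.trans
                  (le_add_of_nonneg_right (by positivity))
            _ ≤ ε := h4δ
      _ = μ W - δ - δ := by rw [tsub_tsub]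
      _ ≤ ∑ i, μ (B i) - δ :=
          tsub_le_tsub_right (tsub_le_iff_right.mpr hBapprox) _
      _ ≤ ∑ i, μT T (B i) := hTB.1
      _ = μT T U := (hμU (μT T)).symm
      _ ≤ μT T W := measure_mono hUW
  · calc μT T W ≤ μT T (U ∪ ⋃ j, C j) := measure_mono hWcov
      _ ≤ μT T U + μT T (⋃ j, C j) := measure_union_le _ _
      _ ≤ ∑ i, μT T (B i) + ∑ j, μT T (C j) := by
          rw [hμU (μT T)]
          gcongr
          exact (measure_iUnion_fintype_le _ _)
      _ ≤ (∑ i, μ (B i) + δ) + (∑ j, μ (C j) + δ) := add_le_add hTB.2 hTC.2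
      _ ≤ (μ W + δ) + (2 * δ + δ) := add_le_add (add_le_add_left hsB_le _)
          (add_le_add_left hCsum _)
      _ = μ W + 4 * δ := by ring
      _ ≤ μ W + ε := add_le_add_right h4δ _
end

section
/- Let g = (r s; t u) ∈ GL₂(ℝ) act on binary cubic forms, let v₀ = (a₀,b₀,c₀,d₀) be a binary cubic form with a₀ = d₀ = 0 and b₀, c₀ ≠ 0, and let κ₁, κ₂ ∈ ℝ not both zero. Suppose there exist constants γ₁, γ₂ (not both zero) and η₁,…,η₄ such that γ₁(ru − st)(κ₁r + κ₂s) + γ₂(ru − st)(κ₁t + κ₂u) = ∑ᵢ ηᵢ aᵢ(g·v₀) holds identically in (r,s,t,u), where aᵢ(g·v₀) are the coefficients of the transformed cubic form (degree-3 polynomials in r,s,t,u). Then γ₁κ₁ = γ₂κ₂ = 0. -/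
/-- If the polynomial identity
`γ₁(ru−st)(κ₁r+κ₂s) + γ₂(ru−st)(κ₁t+κ₂u) = ∑ᵢ ηᵢ aᵢ(g·v₀)` holds identically in
`(r,s,t,u)`, where `aᵢ(g·v₀)` are the coefficients of the binary cubic form
`(0,b₀,c₀,0)` transformed by `g = (r s; t u)`, then `γ₁κ₁ = 0` and `γ₂κ₂ = 0`. -/
theorem stmt_19 (b₀ c₀ κ₁ κ₂ γ₁ γ₂ η₁ η₂ η₃ η₄ : ℝ)
    (hb₀ : b₀ ≠ 0) (hc₀ : c₀ ≠ 0)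
    (hκ : κ₁ ≠ 0 ∨ κ₂ ≠ 0) (hγ : γ₁ ≠ 0 ∨ γ₂ ≠ 0)
    (hid : ∀ r s t u : ℝ,
      γ₁ * (r * u - s * t) * (κ₁ * r + κ₂ * s)
        + γ₂ * (r * u - s * t) * (κ₁ * t + κ₂ * u) =
      η₁ * (b₀ * r ^ 2 * s + c₀ * r * s ^ 2)
        + η₂ * (2 * b₀ * r * s * t + c₀ * s ^ 2 * t + b₀ * r ^ 2 * u
            + 2 * c₀ * r * s * u)
        + η₃ * (2 * b₀ * r * t * u + b₀ * s * t ^ 2 + c₀ * r * u ^ 2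
            + 2 * c₀ * s * t * u)
        + η₄ * (b₀ * t ^ 2 * u + c₀ * t * u ^ 2)) :
    γ₁ * κ₁ = 0 ∧ γ₂ * κ₂ = 0 := by
  have h1 := hid 1 0 0 1
  have h2 := hid (-1) 0 0 1
  have h3 := hid 1 1 1 0
  have h4 := hid 1 1 (-1) 0
  have h5 := hid 1 (-1) 1 0
  have h6 := hid 1 (-1) (-1) 0
  have h7 := hid 0 1 1 1
  have h8 := hid 0 1 1 (-1)
  have h9 := hid 0 (-1) 1 1
  have h10 := hid 0 (-1) 1 (-1)
  constructor
  · linear_combination (1/3) * h1 + (1/3) * h2 - (1/12) * h3 + (1/12) * h4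
      + (1/12) * h5 - (1/12) * h6
  · linear_combination (1/3) * h1 - (1/3) * h2 - (1/12) * h7 + (1/12) * h8
      + (1/12) * h9 - (1/12) * h10
end
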